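/- For all n ≥ 1, 1 ≤ k ≤ 2ⁿ and 0 ≤ q ≤ n, and for every set S ⊆ B_n of size k, the number of q-dimensional subcubes contained in S satisfies m_q(S) ≤ ∑_{j=0}^{k−1} h_q(j). In particular, S*_{k,n} = {bin(0), …, bin(k−1)} is an optimal solution of the problem of finding a k-element subset of B_n containing a maximal number of q-dimensional subcubes. -/

import Mathlib

/-- `h i` is the number of ones in the binary representation of `i`. -/
def h (i : ℕ) : ℕ := (Nat.digits 2 i).sum

/-- `hq q i = C(h i, q)`. -/
def hq (q i : ℕ) : ℕ := (h i).choose q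

/-- `C` is a `q`-dimensional subcube of the binary `n`-cube `B_n = {0,1}ⁿ`:
it is cut out by fixing a bit pattern `b` on a set `Q` of `n - q` coordinates. -/
def IsSubcube (n q : ℕ) (C : Finset (Fin n → Bool)) : Prop :=
  ∃ (Q : Finset (Fin n)) (b : Fin n → Bool),
    Q.card = n - q ∧ C = Finset.univ.filter (fun x => ∀ i ∈ Q, x i = b i)

open Classical in
/-- `mq n q S` is the number of `q`-dimensional subcubes of `B_n` contained in `S`. -/
noncomputable def mq (n q : ℕ) (S : Finset (Fin n → Bool)) : ℕ :=
  (Finset.univ.filter fun C : Finset (Fin n → Bool) => IsSubcube n q C ∧ C ⊆ S).card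

/-- `bin n i` is the `n`-bit binary representation of `i`, viewed as a vertex of
the `n`-cube (coordinate `r` is bit `r` of `i`). -/
def bin (n : ℕ) (i : ℕ) : Fin n → Bool := fun r => i.testBit r

/-- `Sstar n k = {bin 0, bin 1, …, bin (k-1)} ⊆ B_n`. -/
def Sstar (n k : ℕ) : Finset (Fin n → Bool) := (Finset.range k).image (bin n)



/-! ### basic facts -/

lemma subcube_nonempty {n q : ℕ} {C : Finset (Fin n → Bool)} (hC : IsSubcube n q C) :
    C.Nonempty := by
  obtain ⟨Q, b, hQ, rfl⟩ := hC
  exact ⟨b, by simp⟩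

lemma isSubcube_zero {n : ℕ} (C : Finset (Fin n → Bool)) :
    IsSubcube n 0 C ↔ ∃ x, C = {x} := by
  constructor
  · rintro ⟨Q, b, hQ, rfl⟩
    have hQu : Q = Finset.univ := Finset.eq_univ_of_card _ (by simpa using hQ)
    refine ⟨b, ?_⟩
    ext x
    simp [hQu, Finset.mem_filter, funext_iff]
  · rintro ⟨x, rfl⟩
    refine ⟨Finset.univ, x, by simp, ?_⟩
    ext y
    simp [Finset.mem_filter, funext_iff]

lemma mq_zero (n : ℕ) (S : Finset (Fin n → Bool)) : mq n 0 S = S.card := by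
  classical
  unfold mq
  have he : (Finset.univ.filter fun C : Finset (Fin n → Bool) => IsSubcube n 0 C ∧ C ⊆ S)
      = S.image (fun x => {x}) := by
    ext C
    simp only [Finset.mem_filter, Finset.mem_univ, true_and, Finset.mem_image, isSubcube_zero]
    constructor
    · rintro ⟨⟨x, rfl⟩, hsub⟩
      exact ⟨x, by simpa using hsub, rfl⟩
    · rintro ⟨x, hx, rfl⟩
      exact ⟨⟨x, rfl⟩, by simpa using hx⟩
  rw [he, Finset.card_image_of_injective _ (fun x y hxy => by simpa using hxy)]
/-! ### numeric part -/


/-- shifted weight sum -/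
def G (q u k : ℕ) : ℕ := ∑ j ∈ Finset.range k, (h j + u).choose q

lemma h_zero : h 0 = 0 := by simp [h]

lemma h_rec (m : ℕ) (hm : m ≠ 0) : h m = m % 2 + h (m / 2) := by
  unfold h
  rw [Nat.digits_def' (by norm_num : 2 ≤ 2) (Nat.pos_of_ne_zero hm)]
  simp

lemma h_two_mul (m : ℕ) : h (2 * m) = h m := by
  rcases Nat.eq_zero_or_pos m with rfl | hm
  · simp
  · rw [h_rec (2*m) (by omega)]
    simp [Nat.mul_div_cancel_left, Nat.mul_mod_right]

lemma h_two_mul_add_one (m : ℕ) : h (2 * m + 1) = h m + 1 := by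
  rw [h_rec (2*m+1) (by omega)]
  have : (2*m+1) / 2 = m := by omega
  have h2 : (2*m+1) % 2 = 1 := by omega
  rw [this, h2]; ring

lemma G_even (q u m : ℕ) : G q u (2 * m) = G q u m + G q (u+1) m := by
  induction m with
  | zero => simp [G]
  | succ m ih =>
    have : 2 * (m+1) = (2*m) + 1 + 1 := by ring
    rw [this]
    unfold G at *
    rw [Finset.sum_range_succ, Finset.sum_range_succ, Finset.sum_range_succ,
      Finset.sum_range_succ]
    rw [ih]
    rw [h_two_mul, h_two_mul_add_one]
    rw [show h m + 1 + u = h m + (u + 1) by omega]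
    ring

lemma G_odd (q u m : ℕ) : G q u (2 * m + 1) = G q u m + G q (u+1) m + (h m + u).choose q := by
  unfold G
  rw [Finset.sum_range_succ, h_two_mul]
  have := G_even q u m
  unfold G at this
  rw [this]

lemma G_succ (q u k : ℕ) : G q u (k + 1) = G q u k + (h k + u).choose q := by
  unfold G; rw [Finset.sum_range_succ]

lemma G_mono_u (q u k : ℕ) : G q u k ≤ G q (u+1) k := by
  apply Finset.sum_le_sum
  intro j _
  exact Nat.choose_le_choose q (by omega)

lemma key (q : ℕ) : ∀ N u a b, a + b ≤ N → b ≤ a → G q u a + G q (u+1) b ≤ G q u (a + b) := by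
  intro N
  induction N with
  | zero =>
    intro u a b hN hba
    have ha : a = 0 := by omega
    have hb : b = 0 := by omega
    subst ha; subst hb; simp [G]
  | succ N ihN =>
    intro u a b hN hba
    rcases Nat.eq_zero_or_pos b with rfl | hb
    · simp [G]
    rcases Nat.even_or_odd' a with ⟨s, hs | hs⟩ <;> rcases Nat.even_or_odd' b with ⟨t, ht | ht⟩ <;> subst hs <;> subst ht
    · -- a = 2s, b = 2t
      have hts : t ≤ s := by omega
      have h1 : 2*s + 2*t = 2*(s+t) := by ring
      rw [h1, G_even, G_even, G_even]
      have i1 : G q u s + G q (u+1) t ≤ G q u (s+t) := ihN u s t (by omega) hts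
      have i2 : G q (u+1) s + G q (u+1+1) t ≤ G q (u+1) (s+t) := ihN (u+1) s t (by omega) hts
      omega
    · -- a = 2s, b = 2t+1, so t < s
      have hts : t + 1 ≤ s := by omega
      have h1 : 2*s + (2*t+1) = 2*(s+t) + 1 := by ring
      rw [h1, G_even, G_odd, G_odd]
      -- LHS = G u s + G (u+1) s + (G (u+1) t + G (u+2) t + C(h t + u + 1))
      -- goal: ≤ G u (s+t) + G (u+1) (s+t) + C(h (s+t) + u)
      have i1 : G q u s + G q (u+1) (t+1) ≤ G q u (s+(t+1)) := ihN u s (t+1) (by omega) hts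
      rw [G_succ] at i1
      have hst : s + (t+1) = (s+t) + 1 := by ring
      rw [hst, G_succ] at i1
      have i2 : G q (u+1) s + G q (u+1+1) t ≤ G q (u+1) (s+t) := ihN (u+1) s t (by omega) (by omega)
      omega

    · -- a = 2s+1, b = 2t, t ≤ s
      have hts : t ≤ s := by omega
      have h1 : 2*s+1 + 2*t = 2*(s+t) + 1 := by ring
      rw [h1, G_odd, G_even, G_odd]
      have i1 : G q u (s+1) + G q (u+1) t ≤ G q u (s+1+t) := ihN u (s+1) t (by omega) (by omega)
      rw [G_succ] at i1
      have hst : s + 1 + t = (s+t) + 1 := by ring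
      rw [hst, G_succ] at i1
      have i2 : G q (u+1) s + G q (u+1+1) t ≤ G q (u+1) (s+t) := ihN (u+1) s t (by omega) hts
      omega
    · -- a = 2s+1, b = 2t+1, t ≤ s
      have hts : t ≤ s := by omega
      have h1 : 2*s+1 + (2*t+1) = 2*(s+t+1) := by ring
      rw [h1, G_odd, G_odd, G_even]
      rcases eq_or_lt_of_le hts with rfl | hlt
      · -- t = s : equality
        have o1 : t + t + 1 = 2*t + 1 := by ring
        rw [o1, G_odd, G_odd]
      · -- t < s
        have i1 : G q u (s+1) + G q (u+1) t ≤ G q u (s+1+t) := ihN u (s+1) t (by omega) (by omega)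
        rw [G_succ] at i1
        rw [show s + 1 + t = s+t+1 from by omega] at i1
        have i2 : G q (u+1) s + G q (u+1+1) (t+1) ≤ G q (u+1) (s+(t+1)) := ihN (u+1) s (t+1) (by omega) (by omega)
        rw [G_succ] at i2
        rw [show s + (t+1) = s+t+1 from by omega] at i2
        have mono : (h t + (u+1)).choose q ≤ (h t + (u+1+1)).choose q := Nat.choose_le_choose q (by omega)
        omega

lemma key' (q u a b : ℕ) (hba : b ≤ a) : G q u a + G q (u+1) b ≤ G q u (a+b) :=
  key q (a+b) u a b le_rfl hba

lemma G_mono_k (q u : ℕ) : Monotone (G q u) := by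
  intro x y hxy
  exact Finset.sum_le_sum_of_subset (Finset.range_subset_range.2 hxy)

lemma G_pascal (q u c : ℕ) : G (q+1) u c + G q u c = G (q+1) (u+1) c := by
  unfold G
  rw [← Finset.sum_add_distrib]
  apply Finset.sum_congr rfl
  intro j _
  rw [show h j + (u+1) = (h j + u) + 1 from by omega]
  rw [Nat.choose_succ_succ' (h j + u) q]
  omega

/-- main numeric lemma -/
lemma numeric (q a b c : ℕ) (hca : c ≤ a) (hcb : c ≤ b) :
    G (q+1) 0 a + G (q+1) 0 b + G q 0 c ≤ G (q+1) 0 (a+b) := by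
  rcases le_total b a with hba | hab
  · have m1 : G (q+1) 0 c ≤ G (q+1) 0 b := G_mono_k _ _ hcb
    have m2 : G q 0 c ≤ G q 0 b := G_mono_k _ _ hcb
    have mb : G (q+1) 0 b ≤ G (q+1) 0 b := le_rfl
    have hp : G (q+1) 0 b + G q 0 b = G (q+1) 1 b := G_pascal q 0 b
    have hk := key' (q+1) 0 a b hba
    simp only [Nat.zero_add] at hk
    have m3 : G q 0 b ≤ G q 0 b := le_rfl
    omega
  · have m2 : G q 0 c ≤ G q 0 a := G_mono_k _ _ hca
    have hp : G (q+1) 0 a + G q 0 a = G (q+1) 1 a := G_pascal q 0 a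
    have hk := key' (q+1) 0 b a hab
    simp only [Nat.zero_add] at hk
    rw [show b + a = a + b from by omega] at hk
    omega

lemma h_pow_sub_one : ∀ p : ℕ, h (2^p - 1) = p := by
  intro p
  induction p with
  | zero => simp [h]
  | succ p ih =>
    have : 2^(p+1) - 1 = 2 * (2^p - 1) + 1 := by
      have := Nat.one_le_two_pow (n := p)
      rw [pow_succ]; omega
    rw [this, h_two_mul_add_one, ih]

lemma mq_top (n : ℕ) (S : Finset (Fin n → Bool)) :
    mq n n S ≤ G n 0 S.card := by
  classical
  by_cases hmq : mq n n S = 0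
  · omega
  have hne : (Finset.univ.filter fun C : Finset (Fin n → Bool) =>
      IsSubcube n n C ∧ C ⊆ S).Nonempty := by
    rw [← Finset.card_pos]
    unfold mq at hmq
    omega
  obtain ⟨C, hC⟩ := hne
  rw [Finset.mem_filter] at hC
  obtain ⟨-, ⟨Q, b, hQ, rfl⟩, hsub⟩ := hC
  have hQe : Q = ∅ := by
    rw [← Finset.card_eq_zero]
    omega
  subst hQe
  have hCu : (Finset.univ.filter fun x : Fin n → Bool => ∀ i ∈ (∅ : Finset (Fin n)), x i = b i)
      = Finset.univ := by
    ext x; simp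
  rw [hCu] at hsub
  have hSu : S = Finset.univ := Finset.eq_univ_iff_forall.2 fun x => hsub (Finset.mem_univ x)
  have hcard : S.card = 2 ^ n := by
    rw [hSu, Finset.card_univ, Fintype.card_fun]
    simp
  -- mq n n S ≤ 1
  have hle : mq n n S ≤ 1 := by
    unfold mq
    rw [← Finset.card_singleton (Finset.univ : Finset (Fin n → Bool))]
    apply Finset.card_le_card
    intro D hD
    rw [Finset.mem_filter] at hD
    obtain ⟨-, ⟨Q', b', hQ', rfl⟩, -⟩ := hD
    have : Q' = ∅ := by rw [← Finset.card_eq_zero]; omega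
    subst this
    simp only [Finset.mem_singleton]
    ext x; simp
  have h1 : 1 ≤ G n 0 S.card := by
    rw [hcard]
    have hmem : 2^n - 1 ∈ Finset.range (2^n) := by
      have := Nat.one_le_two_pow (n := n)
      simp only [Finset.mem_range]
      omega
    have := Finset.single_le_sum (f := fun j => (h j + 0).choose n)
      (fun i _ => Nat.zero_le _) hmem
    unfold G
    simpa [h_pow_sub_one] using this
  omega

/-! ### splitting along the top coordinate -/

section Rec
variable {m : ℕ}

noncomputable def half (S : Finset (Fin (m+1) → Bool)) (c : Bool) : Finset (Fin m → Bool) :=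
  (S.filter (fun x => x (Fin.last m) = c)).image Fin.init

lemma eq_of_init_eq {x y : Fin (m+1) → Bool} (h1 : Fin.init x = Fin.init y)
    (h2 : x (Fin.last m) = y (Fin.last m)) : x = y := by
  funext i
  induction i using Fin.lastCases with
  | last => exact h2
  | cast j => exact congrFun h1 j

lemma mem_half {S : Finset (Fin (m+1) → Bool)} {c : Bool} {y : Fin m → Bool} :
    y ∈ half S c ↔ Fin.snoc y c ∈ S := by
  unfold half
  simp only [Finset.mem_image, Finset.mem_filter]
  constructor
  · rintro ⟨x, ⟨hxS, hxl⟩, rfl⟩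
    rwa [← hxl, Fin.snoc_init_self]
  · intro hy
    exact ⟨Fin.snoc y c, ⟨hy, Fin.snoc_last ..⟩, Fin.init_snoc ..⟩

lemma half_card (S : Finset (Fin (m+1) → Bool)) :
    (half S false).card + (half S true).card = S.card := by
  classical
  unfold half
  rw [Finset.card_image_of_injOn, Finset.card_image_of_injOn]
  · have : S.filter (fun x => x (Fin.last m) = true)
        = S.filter (fun x => ¬ (x (Fin.last m) = false)) := by
      apply Finset.filter_congr
      intro x _
      simp
    rw [this]
    exact Finset.card_filter_add_card_filter_not _
  · intro x hx y hy hxy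
    simp only [Finset.coe_filter, Set.mem_setOf_eq] at hx hy
    exact eq_of_init_eq hxy (by rw [hx.2, hy.2])
  · intro x hx y hy hxy
    simp only [Finset.coe_filter, Set.mem_setOf_eq] at hx hy
    exact eq_of_init_eq hxy (by rw [hx.2, hy.2])

lemma Qcard' (Q : Finset (Fin (m+1))) :
    (Finset.univ.filter (fun j : Fin m => j.castSucc ∈ Q)).card = (Q.erase (Fin.last m)).card := by
  classical
  rw [← Finset.card_image_of_injective _ (Fin.castSucc_injective m)]
  congr 1
  ext i
  simp only [Finset.mem_image, Finset.mem_filter, Finset.mem_univ, true_and, Finset.mem_erase]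
  constructor
  · rintro ⟨j, hj, rfl⟩
    exact ⟨(Fin.castSucc_lt_last j).ne, hj⟩
  · rintro ⟨hne, hi⟩
    exact ⟨i.castPred hne, by rwa [Fin.castSucc_castPred], Fin.castSucc_castPred _ hne⟩

/-- the projection of a subcube cut out by `(Q, b)` is again cut out by data on `Fin m`. -/
lemma image_init_filter (Q : Finset (Fin (m+1))) (b : Fin (m+1) → Bool) :
    (Finset.univ.filter (fun x : Fin (m+1) → Bool => ∀ i ∈ Q, x i = b i)).image Fin.init
    = Finset.univ.filter (fun y : Fin m → Bool =>
        ∀ j ∈ Finset.univ.filter (fun j : Fin m => j.castSucc ∈ Q), y j = b j.castSucc) := by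
  classical
  ext y
  simp only [Finset.mem_image, Finset.mem_filter, Finset.mem_univ, true_and]
  constructor
  · rintro ⟨x, hx, rfl⟩ j hj
    exact hx _ hj
  · intro hy
    refine ⟨Fin.snoc y (b (Fin.last m)), fun i hi => ?_, Fin.init_snoc ..⟩
    induction i using Fin.lastCases with
    | last => rw [Fin.snoc_last]
    | cast j =>
      rw [Fin.snoc_castSucc]
      exact hy j hi

lemma last_mem_of_const {Q : Finset (Fin (m+1))} {b : Fin (m+1) → Bool} {c : Bool}
    (hconst : ∀ x ∈ Finset.univ.filter (fun x : Fin (m+1) → Bool => ∀ i ∈ Q, x i = b i),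
      x (Fin.last m) = c) :
    Fin.last m ∈ Q := by
  by_contra hl
  have h1 := hconst (Function.update b (Fin.last m) (!c)) (by
    simp only [Finset.mem_filter, Finset.mem_univ, true_and]
    intro i hi
    have hne : i ≠ Fin.last m := by rintro rfl; exact hl hi
    rw [Function.update_of_ne hne])
  rw [Function.update_self] at h1
  simp at h1

lemma mem_image_init_const {C : Finset (Fin (m+1) → Bool)} {c : Bool}
    (hconst : ∀ x ∈ C, x (Fin.last m) = c) (y : Fin m → Bool) :
    y ∈ C.image Fin.init ↔ Fin.snoc y c ∈ C := by
  simp only [Finset.mem_image]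
  constructor
  · rintro ⟨x, hx, rfl⟩
    rw [← hconst x hx, Fin.snoc_init_self]
    exact hx
  · intro hy
    exact ⟨_, hy, Fin.init_snoc ..⟩

lemma subcube_dichotomy {q : ℕ} {C : Finset (Fin (m+1) → Bool)} (hC : IsSubcube (m+1) q C) :
    (∃ c, ∀ x ∈ C, x (Fin.last m) = c) ∨ (∀ x ∈ C, ∀ c, Fin.snoc (Fin.init x) c ∈ C) := by
  classical
  obtain ⟨Q, b, hQ, rfl⟩ := hC
  by_cases hl : Fin.last m ∈ Q
  · left
    exact ⟨b (Fin.last m), fun x hx => (Finset.mem_filter.1 hx).2 _ hl⟩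
  · right
    intro x hx c
    rw [Finset.mem_filter] at hx ⊢
    refine ⟨Finset.mem_univ _, fun i hi => ?_⟩
    have hne : i ≠ Fin.last m := fun e => hl (e ▸ hi)
    obtain ⟨j, rfl⟩ : ∃ j : Fin m, Fin.castSucc j = i := ⟨i.castPred hne, Fin.castSucc_castPred _ hne⟩
    rw [Fin.snoc_castSucc]
    exact hx.2 _ hi

end Rec

section Rec2
variable {m : ℕ}

lemma const_subset {C C' : Finset (Fin (m+1) → Bool)} {c : Bool}
    (h1 : ∀ x ∈ C, x (Fin.last m) = c) (h2 : ∀ x ∈ C', x (Fin.last m) = c)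
    (him : C.image Fin.init ⊆ C'.image Fin.init) : C ⊆ C' := by
  intro x hx
  have hmem : Fin.snoc (Fin.init x) c ∈ C' :=
    (mem_image_init_const h2 _).1 (him (Finset.mem_image_of_mem _ hx))
  rwa [← h1 x hx, Fin.snoc_init_self] at hmem

lemma free_subset {C C' : Finset (Fin (m+1) → Bool)}
    (h2 : ∀ x ∈ C', ∀ c, Fin.snoc (Fin.init x) c ∈ C')
    (him : C.image Fin.init ⊆ C'.image Fin.init) : C ⊆ C' := by
  intro x hx
  obtain ⟨x', hx', he⟩ := Finset.mem_image.1 (him (Finset.mem_image_of_mem _ hx))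
  have h3 := h2 x' hx' (x (Fin.last m))
  rw [he] at h3
  rwa [Fin.snoc_init_self] at h3

lemma mq_rec (q : ℕ) (hq1 : 1 ≤ q) (hqm : q ≤ m) (S : Finset (Fin (m+1) → Bool)) :
    mq (m+1) q S ≤ mq m q (half S false) + mq m q (half S true)
      + mq m (q-1) (half S false ∩ half S true) := by
  classical
  set A : Finset (Finset (Fin (m+1) → Bool)) :=
    Finset.univ.filter (fun C : Finset (Fin (m+1) → Bool) => IsSubcube (m+1) q C ∧ C ⊆ S) with hA
  have hmqA : mq (m+1) q S = A.card := by
    unfold mq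
    rw [hA]
  -- bound for the two constant classes
  have keyconst : ∀ c : Bool,
      (A.filter (fun C => ∀ x ∈ C, x (Fin.last m) = c)).card ≤ mq m q (half S c) := by
    intro c
    unfold mq
    apply Finset.card_le_card_of_injOn (fun C => C.image Fin.init)
    · intro C hC
      simp only [hA, Finset.mem_coe, Finset.mem_filter, Finset.mem_univ, true_and] at hC
      obtain ⟨⟨hsub, hCS⟩, hconst⟩ := hC
      simp only [Finset.mem_coe, Finset.mem_filter, Finset.mem_univ, true_and]
      constructor
      · obtain ⟨Q, b, hQ, rfl⟩ := hsub
        have hl : Fin.last m ∈ Q := last_mem_of_const hconst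
        refine ⟨Finset.univ.filter (fun j : Fin m => j.castSucc ∈ Q),
          fun j => b j.castSucc, ?_, ?_⟩
        · rw [Qcard', Finset.card_erase_of_mem hl, hQ]
          omega
        · exact image_init_filter Q b
      · intro y hy
        rw [mem_image_init_const hconst] at hy
        rw [mem_half]
        exact hCS hy
    · intro C hC C' hC' him
      simp only [Finset.coe_filter, Set.mem_setOf_eq] at hC hC'
      exact Finset.Subset.antisymm
        (const_subset hC.2 hC'.2 (le_of_eq him))
        (const_subset hC'.2 hC.2 (le_of_eq him.symm))
  -- bound for the free class
  have keyfree :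
      (A.filter (fun C => ¬(∀ x ∈ C, x (Fin.last m) = false) ∧
        ¬(∀ x ∈ C, x (Fin.last m) = true))).card
        ≤ mq m (q-1) (half S false ∩ half S true) := by
    unfold mq
    have hclosure : ∀ C ∈ A.filter (fun C => ¬(∀ x ∈ C, x (Fin.last m) = false) ∧
        ¬(∀ x ∈ C, x (Fin.last m) = true)), ∀ x ∈ C, ∀ c, Fin.snoc (Fin.init x) c ∈ C := by
      intro C hC
      simp only [hA, Finset.mem_filter, Finset.mem_univ, true_and] at hC
      obtain ⟨⟨hsub, hCS⟩, hnc0, hnc1⟩ := hC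
      rcases subcube_dichotomy hsub with ⟨c, hc⟩ | hclos
      · cases c
        · exact absurd hc hnc0
        · exact absurd hc hnc1
      · exact hclos
    apply Finset.card_le_card_of_injOn (fun C => C.image Fin.init)
    · intro C hC
      have hclos := hclosure C hC
      simp only [hA, Finset.mem_coe, Finset.mem_filter, Finset.mem_univ, true_and] at hC
      obtain ⟨⟨hsub, hCS⟩, hnc0, hnc1⟩ := hC
      simp only [Finset.mem_coe, Finset.mem_filter, Finset.mem_univ, true_and]
      constructor
      · obtain ⟨Q, b, hQ, rfl⟩ := hsub
        have hl : Fin.last m ∉ Q := by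
          intro hl
          have hc : ∀ x ∈ Finset.univ.filter (fun x : Fin (m+1) → Bool => ∀ i ∈ Q, x i = b i),
              x (Fin.last m) = b (Fin.last m) :=
            fun x hx => (Finset.mem_filter.1 hx).2 _ hl
          cases hb : b (Fin.last m)
          · exact hnc0 (by rw [hb] at hc; exact hc)
          · exact hnc1 (by rw [hb] at hc; exact hc)
        refine ⟨Finset.univ.filter (fun j : Fin m => j.castSucc ∈ Q),
          fun j => b j.castSucc, ?_, ?_⟩
        · rw [Qcard', Finset.erase_eq_of_notMem hl, hQ]
          omega
        · exact image_init_filter Q b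
      · intro y hy
        rw [Finset.mem_inter, mem_half, mem_half]
        obtain ⟨x, hx, rfl⟩ := Finset.mem_image.1 hy
        exact ⟨hCS (hclos x hx false), hCS (hclos x hx true)⟩
    · intro C hC C' hC' him
      exact Finset.Subset.antisymm
        (free_subset (hclosure C' hC') (le_of_eq him))
        (free_subset (hclosure C hC) (le_of_eq him.symm))
  -- partition of A
  have h1 := Finset.card_filter_add_card_filter_not
    (s := A) (p := fun C => ∀ x ∈ C, x (Fin.last m) = false)
  have h2 := Finset.card_filter_add_card_filter_not
    (s := A.filter (fun C => ¬ (∀ x ∈ C, x (Fin.last m) = false)))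
    (p := fun C => ∀ x ∈ C, x (Fin.last m) = true)
  have h3 : ((A.filter (fun C => ¬ (∀ x ∈ C, x (Fin.last m) = false))).filter
      (fun C => ∀ x ∈ C, x (Fin.last m) = true)).card
      ≤ (A.filter (fun C => ∀ x ∈ C, x (Fin.last m) = true)).card := by
    apply Finset.card_le_card
    intro C hC
    simp only [Finset.mem_filter] at hC ⊢
    exact ⟨hC.1.1, hC.2⟩
  have h4 : ((A.filter (fun C => ¬ (∀ x ∈ C, x (Fin.last m) = false))).filter
      (fun C => ¬ (∀ x ∈ C, x (Fin.last m) = true)))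
      = A.filter (fun C => ¬(∀ x ∈ C, x (Fin.last m) = false) ∧
        ¬(∀ x ∈ C, x (Fin.last m) = true)) := by
    rw [Finset.filter_filter]
  rw [hmqA]
  have kc0 := keyconst false
  have kc1 := keyconst true
  rw [h4] at h2
  linarith [h1, h2, h3, kc0, kc1, keyfree]

end Rec2

lemma main_bound : ∀ n q, q ≤ n → ∀ S : Finset (Fin n → Bool), mq n q S ≤ G q 0 S.card := by
  intro n
  induction n with
  | zero =>
    intro q hq S
    have : q = 0 := by omega
    subst this
    rw [mq_zero]
    simp [G]
  | succ m ih =>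
    intro q hq S
    rcases Nat.eq_zero_or_pos q with rfl | hq1
    · rw [mq_zero]
      simp [G]
    rcases eq_or_lt_of_le hq with rfl | hlt
    · exact mq_top (m+1) S
    have hqm : q ≤ m := by omega
    have hrec := mq_rec q hq1 hqm S
    have i0 := ih q hqm (half S false)
    have i1 := ih q hqm (half S true)
    have i2 := ih (q-1) (by omega) (half S false ∩ half S true)
    obtain ⟨q', rfl⟩ : ∃ q', q = q' + 1 := ⟨q - 1, by omega⟩
    rw [show q' + 1 - 1 = q' from rfl] at hrec i2
    have hnum := numeric q' (half S false).card (half S true).card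
      (half S false ∩ half S true).card
      (Finset.card_le_card Finset.inter_subset_left)
      (Finset.card_le_card Finset.inter_subset_right)
    rw [half_card] at hnum
    have m2 : G q' 0 (half S false ∩ half S true).card ≤
        G q' 0 (half S false ∩ half S true).card := le_rfl
    omega

/-! ### values of vertices -/

def val {n : ℕ} (x : Fin n → Bool) : ℕ := ∑ i : Fin n, cond (x i) (2 ^ (i : ℕ)) 0

lemma val_succ {n : ℕ} (x : Fin (n+1) → Bool) :
    val x = cond (x 0) 1 0 + 2 * val (x ∘ Fin.succ) := by
  unfold val
  rw [Fin.sum_univ_succ]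
  have hterm : ∀ i : Fin n, cond (x i.succ) (2 ^ ((i.succ : Fin (n+1)) : ℕ)) 0
      = 2 * cond ((x ∘ Fin.succ) i) (2 ^ (i : ℕ)) 0 := by
    intro i
    cases hx : x i.succ <;> simp [Function.comp, hx, Fin.val_succ, pow_succ, mul_comm]
  rw [Finset.sum_congr rfl (fun i _ => hterm i), ← Finset.mul_sum]
  simp

lemma val_lt {n : ℕ} (x : Fin n → Bool) : val x < 2 ^ n := by
  induction n with
  | zero => simp [val]
  | succ n ih =>
    rw [val_succ]
    have := ih (x ∘ Fin.succ)
    have h2 : cond (x 0) 1 0 ≤ 1 := by cases x 0 <;> simp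
    rw [pow_succ]
    omega

lemma val_testBit_lt {n : ℕ} (x : Fin n → Bool) (r : ℕ) (hr : r < n) :
    (val x).testBit r = x ⟨r, hr⟩ := by
  induction n generalizing r with
  | zero => omega
  | succ n ih =>
    rw [val_succ]
    rcases Nat.eq_zero_or_pos r with rfl | hrpos
    · rw [Nat.testBit_zero]
      have he : (⟨0, hr⟩ : Fin (n+1)) = 0 := rfl
      rw [he]
      cases hx : x 0
      · simp only [hx, cond_false]
        have hm : (0 + 2 * val (x ∘ Fin.succ)) % 2 = 0 := by omega
        simp [hm]
      · simp only [hx, cond_true]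
        have hm : (1 + 2 * val (x ∘ Fin.succ)) % 2 = 1 := by omega
        simp [hm]
    · obtain ⟨s, rfl⟩ : ∃ s, r = s + 1 := ⟨r - 1, by omega⟩
      rw [Nat.testBit_succ]
      have hdiv : (cond (x 0) 1 0 + 2 * val (x ∘ Fin.succ)) / 2 = val (x ∘ Fin.succ) := by
        cases x 0 <;> simp <;> omega
      rw [hdiv, ih (x ∘ Fin.succ) s (by omega)]
      rfl

lemma bin_val {n : ℕ} (x : Fin n → Bool) : bin n (val x) = x := by
  funext r
  unfold bin
  rw [val_testBit_lt x r r.isLt]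

lemma val_bin {n j : ℕ} (hj : j < 2 ^ n) : val (bin n j) = j := by
  apply Nat.eq_of_testBit_eq
  intro r
  by_cases hr : r < n
  · rw [val_testBit_lt _ r hr]
    rfl
  · have h1 : val (bin n j) < 2 ^ r :=
      lt_of_lt_of_le (val_lt _) (Nat.pow_le_pow_right (by norm_num) (by omega))
    have h2 : j < 2 ^ r := lt_of_lt_of_le hj (Nat.pow_le_pow_right (by norm_num) (by omega))
    rw [Nat.testBit_lt_two_pow h1, Nat.testBit_lt_two_pow h2]

lemma val_le_of_pointwise {n : ℕ} {x y : Fin n → Bool}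
    (hxy : ∀ i, x i = true → y i = true) : val x ≤ val y := by
  apply Finset.sum_le_sum
  intro i _
  cases hx : x i
  · simp
  · rw [hxy i hx]

/-! ### counting bits -/

lemma hcard_range : ∀ w j, j < 2 ^ w → ((Finset.range w).filter (fun i => j.testBit i)).card = h j := by
  intro w
  induction w with
  | zero =>
    intro j hj
    have : j = 0 := by omega
    subst this
    simp [h]
  | succ w ih =>
    intro j hj
    rcases Nat.eq_zero_or_pos j with rfl | hjpos
    · simp only [Nat.zero_testBit, Bool.false_eq_true]
      simp [h]
    rw [Finset.card_filter, Finset.sum_range_succ']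
    have hstep : ∀ i, (if j.testBit (i+1) then 1 else 0) = if (j/2).testBit i then 1 else 0 := by
      intro i
      rw [← Nat.testBit_succ]
    simp only [hstep]
    rw [← Finset.card_filter, ih (j/2) (by omega)]
    rw [h_rec j (by omega), Nat.testBit_zero]
    have : j % 2 = 0 ∨ j % 2 = 1 := by omega
    rcases this with hm | hm <;> simp [hm] <;> omega

lemma hcard_fin {n j : ℕ} (hj : j < 2 ^ n) :
    (Finset.univ.filter (fun i : Fin n => bin n j i = true)).card = h j := by
  classical
  rw [← hcard_range n j hj]
  apply Finset.card_nbij (fun i : Fin n => (i : ℕ))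
  · intro i hi
    simp only [Finset.mem_coe, Finset.mem_filter, Finset.mem_univ, true_and] at hi
    simp only [Finset.mem_coe, Finset.mem_filter, Finset.mem_range]
    exact ⟨i.isLt, hi⟩
  · exact Fin.val_injective.injOn
  · intro i hi
    simp only [Finset.coe_filter, Set.mem_setOf_eq, Finset.mem_range] at hi
    refine ⟨⟨i, hi.1⟩, ?_, rfl⟩
    simp only [Finset.coe_filter, Set.mem_setOf_eq, Finset.mem_univ, true_and]
    exact hi.2

/-! ### lower bound for the initial segment -/

lemma val_le_cube {n j : ℕ} (hj : j < 2 ^ n) {F : Finset (Fin n)}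
    (hF : ∀ i ∈ F, bin n j i = true) {x : Fin n → Bool}
    (hx : ∀ i, i ∉ F → x i = bin n j i) : val x ≤ j := by
  have hle : val x ≤ val (bin n j) := by
    apply val_le_of_pointwise
    intro i hxi
    by_cases hiF : i ∈ F
    · exact hF i hiF
    · rw [← hx i hiF]
      exact hxi
  rwa [val_bin hj] at hle

lemma lower (n k q : ℕ) (hk : k ≤ 2 ^ n) : G q 0 k ≤ mq n q (Sstar n k) := by
  classical
  unfold mq
  have hGcard : G q 0 k = ((Finset.range k).sigma
      (fun j => (Finset.univ.filter (fun i : Fin n => bin n j i = true)).powersetCard q)).card := by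
    rw [Finset.card_sigma]
    unfold G
    apply Finset.sum_congr rfl
    intro j hj
    rw [Finset.card_powersetCard, hcard_fin (lt_of_lt_of_le (Finset.mem_range.1 hj) hk)]
    rw [Nat.add_zero]
  rw [hGcard]
  apply Finset.card_le_card_of_injOn
    (fun p : (_ : ℕ) × Finset (Fin n) =>
      Finset.univ.filter (fun x : Fin n → Bool => ∀ i, i ∉ p.2 → x i = bin n p.1 i))
  · rintro ⟨j, F⟩ hp
    simp only [Finset.mem_coe, Finset.mem_sigma, Finset.mem_range, Finset.mem_powersetCard] at hp
    obtain ⟨hjk, hFsub, hFcard⟩ := hp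
    simp only [Finset.mem_coe, Finset.mem_filter, Finset.mem_univ, true_and]
    constructor
    · refine ⟨Fᶜ, bin n j, ?_, ?_⟩
      · rw [Finset.card_compl, hFcard]
        simp
      · ext x
        simp [Finset.mem_compl]
    · intro x hx
      simp only [Finset.mem_filter, Finset.mem_univ, true_and] at hx
      have hle : val x ≤ j := by
        apply val_le_cube (lt_of_lt_of_le hjk hk)
        · intro i hiF
          exact (Finset.mem_filter.1 (hFsub hiF)).2
        · exact hx
      unfold Sstar
      rw [Finset.mem_image]
      exact ⟨val x, Finset.mem_range.2 (lt_of_le_of_lt hle hjk), bin_val x⟩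
  · rintro ⟨j, F⟩ hp ⟨j', F'⟩ hp' he
    simp only [Finset.mem_coe, Finset.mem_sigma, Finset.mem_range, Finset.mem_powersetCard] at hp hp'
    obtain ⟨hjk, hFsub, hFcard⟩ := hp
    obtain ⟨hjk', hFsub', hFcard'⟩ := hp'
    simp only at he
    have hones : ∀ i ∈ F, bin n j i = true := fun i hi => (Finset.mem_filter.1 (hFsub hi)).2
    have hones' : ∀ i ∈ F', bin n j' i = true := fun i hi => (Finset.mem_filter.1 (hFsub' hi)).2
    have hmem : ∀ (j0 : ℕ) (F0 : Finset (Fin n)), bin n j0 ∈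
        Finset.univ.filter (fun x : Fin n → Bool => ∀ i, i ∉ F0 → x i = bin n j0 i) := by
      intro j0 F0
      simp
    have hj1 : j ≤ j' := by
      have h1 := hmem j F
      rw [he] at h1
      simp only [Finset.mem_filter, Finset.mem_univ, true_and] at h1
      have := val_le_cube (lt_of_lt_of_le hjk' hk) hones' h1
      rwa [val_bin (lt_of_lt_of_le hjk hk)] at this
    have hj2 : j' ≤ j := by
      have h1 := hmem j' F'
      rw [← he] at h1
      simp only [Finset.mem_filter, Finset.mem_univ, true_and] at h1
      have := val_le_cube (lt_of_lt_of_le hjk hk) hones h1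
      rwa [val_bin (lt_of_lt_of_le hjk' hk)] at this
    have hjj : j = j' := le_antisymm hj1 hj2
    subst hjj
    have hflip : ∀ (F0 : Finset (Fin n)) (i : Fin n),
        i ∈ F0 ↔ Function.update (bin n j) i (!(bin n j i)) ∈
          Finset.univ.filter (fun x : Fin n → Bool => ∀ i', i' ∉ F0 → x i' = bin n j i') := by
      intro F0 i
      simp only [Finset.mem_filter, Finset.mem_univ, true_and]
      constructor
      · intro hi i' hi'
        have hne : i' ≠ i := by rintro rfl; exact hi' hi
        rw [Function.update_of_ne hne]
      · intro hy
        by_contra hiF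
        have := hy i hiF
        rw [Function.update_self] at this
        simp at this
    have hFF : F = F' := by
      ext i
      rw [hflip F i, hflip F' i, he]
    subst hFF
    rfl


/-- For `n ≥ 1`, `1 ≤ k ≤ 2^n` and `q ≤ n`, every `k`-element set `S ⊆ B_n` contains at
most `∑_{j=0}^{k-1} h_q j` many `q`-dimensional subcubes; in particular `S*_{k,n}` is an
optimal solution of the problem of finding a `k`-element subset of `B_n` containing a
maximal number of `q`-dimensional subcubes. -/
theorem mq_le_sum_hq (n k q : ℕ) (hn : 1 ≤ n) (hk1 : 1 ≤ k) (hk2 : k ≤ 2 ^ n) (hq' : q ≤ n) :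
    (∀ S : Finset (Fin n → Bool), S.card = k → mq n q S ≤ ∑ j ∈ Finset.range k, hq q j) ∧
    (∀ S : Finset (Fin n → Bool), S.card = k → mq n q S ≤ mq n q (Sstar n k)) := by
  have hsum : ∀ k', (∑ j ∈ Finset.range k', hq q j) = G q 0 k' := by
    intro k'
    unfold G hq
    apply Finset.sum_congr rfl
    intro j _
    rw [Nat.add_zero]
  have part1 : ∀ S : Finset (Fin n → Bool), S.card = k →
      mq n q S ≤ ∑ j ∈ Finset.range k, hq q j := by
    intro S hS
    rw [hsum]
    have hb := main_bound n q hq' S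
    rwa [hS] at hb
  refine ⟨part1, fun S hS => le_trans (part1 S hS) ?_⟩
  rw [hsum]
  exact lower n k q hk2
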